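/- Let G be a finite solvable group with kpp(G) = k, where kpp(G) is the number of conjugacy classes of G consisting of elements of prime-power order. Then |G| ≤ ∏_{i=0}^{k-1} (k-i)^(2^i). -/

import Mathlib

open Set

private def ppSet (G : Type*) [Group G] : Set (Set G) :=
  {C : Set G | ∃ x : G, (∃ p m : ℕ, p.Prime ∧ orderOf x = p ^ m) ∧ C = conjugatesOf x}

private def Bnd (k : ℕ) : ℕ := ∏ i ∈ Finset.range k, (k - i) ^ 2 ^ i

private lemma Bnd_pos (k : ℕ) : 0 < Bnd k :=
  Finset.prod_pos fun i hi => pow_pos (by simp at hi; omega) _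

private lemma Bnd_succ (k : ℕ) : Bnd (k + 1) = (k + 1) * Bnd k ^ 2 := by
  rw [Bnd, Finset.prod_range_succ']
  simp only [Nat.sub_zero, pow_zero, pow_one, Nat.succ_sub_succ_eq_sub]
  rw [mul_comm, Bnd, ← Finset.prod_pow]
  congr 1
  refine Finset.prod_congr rfl fun i _ => ?_
  rw [← pow_mul, pow_succ, pow_mul]

private lemma Bnd_mono : Monotone Bnd := by
  apply monotone_nat_of_le_succ
  intro k
  rw [Bnd_succ, sq]
  calc Bnd k = 1 * (1 * Bnd k) := by ring
  _ ≤ (k+1) * (Bnd k * Bnd k) :=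
      Nat.mul_le_mul (by omega) (Nat.mul_le_mul_right _ (Bnd_pos k))

private lemma image_conjugatesOf {G Q : Type*} [Group G] [Group Q] (f : G →* Q)
    (hf : Function.Surjective f) (x : G) : f '' conjugatesOf x = conjugatesOf (f x) := by
  ext y
  simp only [conjugatesOf, mem_image, mem_setOf_eq, isConj_iff]
  constructor
  · rintro ⟨z, ⟨c, rfl⟩, rfl⟩
    exact ⟨f c, by simp [map_mul]⟩
  · rintro ⟨c, rfl⟩
    obtain ⟨g, rfl⟩ := hf c
    exact ⟨g * x * g⁻¹, ⟨g, rfl⟩, by simp [map_mul]⟩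

private lemma exists_pp_lift {G Q : Type*} [Group G] [Finite G] [Group Q] (f : G →* Q)
    (hf : Function.Surjective f) (x : Q) (p m : ℕ) (hp : p.Prime) (hx : orderOf x = p ^ m) :
    ∃ y : G, f y = x ∧ ∃ n : ℕ, orderOf y = p ^ n := by
  haveI : Fact p.Prime := ⟨hp⟩
  have hZ : IsPGroup p (Subgroup.zpowers x) := by
    intro g
    obtain ⟨j, hj⟩ := g.2
    refine ⟨m, ?_⟩
    have h1 : (g : Q) ^ p ^ m = 1 := by
      rw [← hj, ← zpow_natCast, ← zpow_mul, mul_comm, zpow_mul, zpow_natCast,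
        ← hx, pow_orderOf_eq_one, one_zpow]
    exact Subtype.ext (by simpa using h1)
  obtain ⟨S, hS⟩ := hZ.exists_le_sylow
  obtain ⟨R, rfl⟩ := Sylow.mapSurjective_surjective hf p S
  have hxS : x ∈ (Sylow.mapSurjective hf R : Subgroup Q) := hS (Subgroup.mem_zpowers x)
  rw [Sylow.coe_mapSurjective] at hxS
  obtain ⟨y, hyR, hyx⟩ := hxS
  refine ⟨y, hyx, ?_⟩
  obtain ⟨n, hn⟩ := IsPGroup.iff_orderOf.mp R.isPGroup' ⟨y, hyR⟩
  exact ⟨n, by rwa [Subgroup.orderOf_mk] at hn⟩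

private lemma ncard_conjugatesOf_le {G : Type*} [Group G] [Finite G] (N : Subgroup G)
    (hcomm : ∀ a ∈ N, ∀ b ∈ N, a * b = b * a) (n : G) (hn : n ∈ N) :
    (conjugatesOf n).ncard ≤ Nat.card (G ⧸ N) := by
  classical
  have hresp : ∀ a b : G, @Setoid.r _ (QuotientGroup.leftRel N) a b →
      (fun g => g * n * g⁻¹) a = (fun g => g * n * g⁻¹) b := by
    intro a b hab
    rw [QuotientGroup.leftRel_apply] at hab
    simp only []
    have h2 : (a⁻¹ * b) * n * (a⁻¹ * b)⁻¹ = n := by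
      rw [hcomm _ hab _ hn]; group
    calc a * n * a⁻¹ = a * ((a⁻¹*b) * n * (a⁻¹*b)⁻¹) * a⁻¹ := by rw [h2]
      _ = b * n * b⁻¹ := by group
  let F : G ⧸ N → G := fun q => Quotient.liftOn' q (fun g => g * n * g⁻¹) hresp
  have hsub : conjugatesOf n ⊆ Set.range F := by
    intro y hy
    obtain ⟨c, rfl⟩ := isConj_iff.mp hy
    exact ⟨QuotientGroup.mk c, rfl⟩
  have h3 : Nat.card (Set.range F) ≤ Nat.card (G ⧸ N) :=
    Nat.card_le_card_of_surjective (Set.rangeFactorization F) Set.rangeFactorization_surjective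
  calc (conjugatesOf n).ncard ≤ (Set.range F).ncard := ncard_le_ncard hsub (toFinite _)
    _ = Nat.card (Set.range F) := (Nat.card_coe_set_eq _).symm
    _ ≤ Nat.card (G ⧸ N) := h3

private lemma conjugatesOf_one' {G : Type*} [Group G] : conjugatesOf (1 : G) = {1} := by
  ext y
  simp only [conjugatesOf, mem_setOf_eq, isConj_iff, mem_singleton_iff]
  constructor
  · rintro ⟨c, rfl⟩; group
  · rintro rfl; exact ⟨1, by group⟩

private lemma one_mem_ppSet {G : Type*} [Group G] : conjugatesOf (1 : G) ∈ ppSet G :=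
  ⟨1, ⟨2, 0, Nat.prime_two, by simp⟩, rfl⟩

private lemma exists_last {P : ℕ → Prop} (h0 : ¬ P 0) (hn : ∃ n, P n) :
    ∃ m, ¬ P m ∧ P (m + 1) := by
  obtain ⟨n, hn⟩ := hn
  induction n with
  | zero => exact absurd hn h0
  | succ n ih =>
    by_cases h : P n
    · exact ih h
    · exact ⟨n, h, hn⟩

universe u

private theorem main : ∀ (n : ℕ) (G : Type u) [Group G] [Finite G], IsSolvable G →
    Nat.card G = n → Nat.card G ≤ Bnd ((ppSet G).ncard) := by
  intro n
  induction n using Nat.strong_induction_on with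
  | _ n IH =>
  intro G _ _ hsolv hcard
  rcases subsingleton_or_nontrivial G with hG | hG
  · haveI : Unique G := ⟨⟨1⟩, fun a => Subsingleton.elim a 1⟩
    rw [Nat.card_unique]
    exact Bnd_pos _
  -- nontrivial case: find last nontrivial derived term A
  obtain ⟨m, hm, hm1⟩ := exists_last (P := fun i => derivedSeries G i = ⊥)
    (by rw [derivedSeries_zero]; exact fun h => top_ne_bot h) hsolv.solvable
  set A := derivedSeries G m with hA
  haveI hAnormal : A.Normal := derivedSeries_normal G m
  have hAcomm : ∀ a ∈ A, ∀ b ∈ A, a * b = b * a := by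
    rw [derivedSeries_succ, Subgroup.commutator_eq_bot_iff_le_centralizer] at hm1
    intro a ha b hb
    exact (Subgroup.mem_centralizer_iff.mp (hm1 ha) b hb).symm
  have hA1 : 1 < Nat.card A := (Subgroup.one_lt_card_iff_ne_bot A).mpr hm
  set p := (Nat.card A).minFac with hpdef
  have hp : p.Prime := Nat.minFac_prime (by omega)
  haveI : Fact p.Prime := ⟨hp⟩
  obtain ⟨P⟩ : Nonempty (Sylow p A) := inferInstance
  haveI hPn : (P : Subgroup A).Normal := by
    constructor
    intro x hx g
    have hgx : g * x = x * g := Subtype.ext (by push_cast; exact hAcomm _ g.2 _ x.2)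
    have hfix : g * x * g⁻¹ = x := by rw [hgx]; group
    rw [hfix]; exact hx
  haveI hPc := Sylow.characteristic_of_normal P hPn
  set N := (P : Subgroup A).map A.subtype with hNdef
  haveI hNn : N.Normal := ConjAct.normal_of_characteristic_of_normal
  -- basic facts about N
  have hNle : N ≤ A := Subgroup.map_subtype_le _
  have hNcomm : ∀ a ∈ N, ∀ b ∈ N, a * b = b * a :=
    fun a ha b hb => hAcomm a (hNle ha) b (hNle hb)
  have hNpg : IsPGroup p N := P.isPGroup'.map A.subtype
  have hNcard : Nat.card N = Nat.card P := by
    have h1 : Nat.card N = ((N : Set G)).ncard := by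
      rw [← Nat.card_coe_set_eq]; rfl
    rw [h1, hNdef, Subgroup.coe_map,
      ncard_image_of_injective _ A.subtype_injective, ← Nat.card_coe_set_eq]
    rfl
  have hPcard1 : 1 < Nat.card P := by
    rw [P.card_eq_multiplicity]
    exact Nat.one_lt_pow
      (Nat.Prime.factorization_pos_of_dvd hp Nat.card_pos.ne' (Nat.minFac_dvd _)).ne'
      hp.one_lt
  have hN1 : 1 < Nat.card N := hNcard ▸ hPcard1
  -- quotient
  have hGQ : Nat.card G = Nat.card (G ⧸ N) * Nat.card N :=
    Subgroup.card_eq_card_quotient_mul_card_subgroup N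
  have hQpos : 0 < Nat.card (G ⧸ N) := Nat.card_pos
  have hQlt : Nat.card (G ⧸ N) < n := by
    rw [← hcard, hGQ]
    exact (Nat.lt_mul_iff_one_lt_right hQpos).mpr hN1
  have hIHQ : Nat.card (G ⧸ N) ≤ Bnd ((ppSet (G ⧸ N)).ncard) :=
    IH _ hQlt (G ⧸ N) (haveI : Group.IsSolvable G := hsolv; Group.isSolvable_of_surjective (QuotientGroup.mk'_surjective N)) rfl
  set π := QuotientGroup.mk' N with hπdef
  have hπ : Function.Surjective ⇑π := QuotientGroup.mk'_surjective N
  set SG := ppSet G with hSG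
  set SQ := ppSet (G ⧸ N) with hSQ
  set T := {C ∈ SG | C ⊆ (N : Set G)} with hT
  have hTsub : T ⊆ SG := sep_subset _ _
  -- lifting claim
  have hlift : ∀ D ∈ SQ \ {conjugatesOf (1 : G ⧸ N)}, ∃ C, C ∈ SG \ T ∧ ⇑π '' C = D := by
    rintro D ⟨⟨x, ⟨q, mq, hq, hxq⟩, rfl⟩, hD⟩
    obtain ⟨y, hyx, ny, hyo⟩ := exists_pp_lift π hπ x q mq hq hxq
    refine ⟨conjugatesOf y, ⟨⟨y, ⟨q, ny, hq, hyo⟩, rfl⟩, ?_⟩, ?_⟩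
    · rintro ⟨-, hsubN⟩
      have hyN : y ∈ N := hsubN (mem_conjugatesOf_self)
      have : π y = 1 := (QuotientGroup.eq_one_iff y).mpr hyN
      apply hD
      rw [mem_singleton_iff, ← hyx, ← this]
    · rw [image_conjugatesOf π hπ, hyx]
  -- class counting
  have hcount1 : (SQ \ {conjugatesOf (1 : G ⧸ N)}).ncard ≤ (SG \ T).ncard := by
    classical
    set g : Set (G ⧸ N) → Set G := fun D =>
      if h : ∃ C, C ∈ SG \ T ∧ ⇑π '' C = D then h.choose else ∅ with hg
    apply ncard_le_ncard_of_injOn g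
    · intro D hD
      have h : ∃ C, C ∈ SG \ T ∧ ⇑π '' C = D := hlift D hD
      simp only [hg, dif_pos h]
      exact h.choose_spec.1
    · intro D1 h1 D2 h2 heq
      have e1 : ∃ C, C ∈ SG \ T ∧ ⇑π '' C = D1 := hlift D1 h1
      have e2 : ∃ C, C ∈ SG \ T ∧ ⇑π '' C = D2 := hlift D2 h2
      simp only [hg, dif_pos e1, dif_pos e2] at heq
      rw [← e1.choose_spec.2, ← e2.choose_spec.2, heq]
  have htrivQ : conjugatesOf (1 : G ⧸ N) ∈ SQ := one_mem_ppSet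
  have hSQcount : (SQ \ {conjugatesOf (1 : G ⧸ N)}).ncard + 1 = SQ.ncard :=
    ncard_diff_singleton_add_one htrivQ (toFinite _)
  have hSGcount : (SG \ T).ncard + T.ncard = SG.ncard :=
    ncard_diff_add_ncard_of_subset hTsub (toFinite _)
  -- T has at least two elements
  obtain ⟨n₀, hn₀N, hn₀1⟩ : ∃ x ∈ N, x ≠ (1 : G) := by
    rw [← Subgroup.nontrivial_iff_exists_ne_one]
    exact Finite.one_lt_card_iff_nontrivial.mp hN1
  have hclass_sub : ∀ x ∈ N, conjugatesOf x ⊆ (N : Set G) := by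
    intro x hx y hy
    obtain ⟨c, hc⟩ := isConj_iff.mp hy
    rw [← hc]
    exact hNn.conj_mem x hx c
  have hppN : ∀ x ∈ N, conjugatesOf x ∈ SG := by
    intro x hx
    obtain ⟨j, hj⟩ := IsPGroup.iff_orderOf.mp hNpg ⟨x, hx⟩
    exact ⟨x, ⟨p, j, hp, by rwa [Subgroup.orderOf_mk] at hj⟩, rfl⟩
  have hmemT : ∀ x ∈ N, conjugatesOf x ∈ T := fun x hx => ⟨hppN x hx, hclass_sub x hx⟩
  have hT2 : 2 ≤ T.ncard := by
    have hne : conjugatesOf (1 : G) ≠ conjugatesOf n₀ := by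
      intro h
      apply hn₀1
      have h2 := mem_conjugatesOf_self (a := n₀)
      rw [← h, conjugatesOf_one'] at h2
      exact h2
    have hpair : ({conjugatesOf (1 : G), conjugatesOf n₀} : Set (Set G)) ⊆ T := by
      intro C hC
      rcases hC with rfl | rfl
      · exact hmemT 1 N.one_mem
      · exact hmemT n₀ hn₀N
    calc 2 = ({conjugatesOf (1 : G), conjugatesOf n₀} : Set (Set G)).ncard :=
        (ncard_pair hne).symm
      _ ≤ T.ncard := ncard_le_ncard hpair (toFinite _)
  -- bound on |N|
  have hNbound : Nat.card N ≤ 1 + (T.ncard - 1) * Nat.card (G ⧸ N) := by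
    classical
    set T' := T \ {conjugatesOf (1 : G)} with hT'
    have hcover : (toFinite (N : Set G)).toFinset ⊆
        insert (1 : G) ((toFinite T').toFinset.biUnion fun C => (toFinite C).toFinset) := by
      intro x hx
      rw [Set.Finite.mem_toFinset] at hx
      rcases eq_or_ne x 1 with rfl | hx1
      · exact Finset.mem_insert_self _ _
      refine Finset.mem_insert_of_mem ?_
      rw [Finset.mem_biUnion]
      refine ⟨conjugatesOf x, ?_, by rw [Set.Finite.mem_toFinset]; exact mem_conjugatesOf_self⟩
      rw [Set.Finite.mem_toFinset]
      refine ⟨hmemT x hx, ?_⟩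
      rw [mem_singleton_iff]
      intro h
      apply hx1
      have h2 := mem_conjugatesOf_self (a := x)
      rw [h, conjugatesOf_one'] at h2
      exact h2
    have heach : ∀ C ∈ (toFinite T').toFinset, (toFinite C).toFinset.card ≤ Nat.card (G ⧸ N) := by
      intro C hC
      rw [Set.Finite.mem_toFinset] at hC
      obtain ⟨⟨⟨x, hpp, rfl⟩, hsubN⟩, -⟩ := hC
      have hxN : x ∈ N := hsubN mem_conjugatesOf_self
      rw [← Set.ncard_eq_toFinset_card]
      exact ncard_conjugatesOf_le N hNcomm x hxN
    have hcard1 : Nat.card N = (toFinite (N : Set G)).toFinset.card := by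
      rw [← Set.ncard_eq_toFinset_card, ← Nat.card_coe_set_eq]; rfl
    have hT'card : (toFinite T').toFinset.card = T.ncard - 1 := by
      rw [← Set.ncard_eq_toFinset_card]
      exact ncard_diff_singleton_of_mem (hmemT 1 N.one_mem)
    calc Nat.card N = (toFinite (N : Set G)).toFinset.card := hcard1
      _ ≤ ((toFinite T').toFinset.biUnion fun C => (toFinite C).toFinset).card + 1 :=
          (Finset.card_le_card hcover).trans (Finset.card_insert_le _ _)
      _ ≤ (toFinite T').toFinset.card * Nat.card (G ⧸ N) + 1 :=
          Nat.add_le_add_right (Finset.card_biUnion_le_card_mul _ _ _ heach) 1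
      _ = 1 + (T.ncard - 1) * Nat.card (G ⧸ N) := by rw [hT'card]; ring
  -- final arithmetic
  set k := SG.ncard with hk
  set k' := SQ.ncard with hk'
  set t := T.ncard with ht
  have hk'1 : 1 ≤ k' := (ncard_pos (toFinite _)).mpr ⟨_, htrivQ⟩
  have hkge : k' - 1 + t ≤ k := by omega
  have hk'le : k' ≤ k - 1 := by omega
  have htle : t ≤ k := by omega
  have hk1 : 1 ≤ k := by omega
  have hQB : Nat.card (G ⧸ N) ≤ Bnd (k - 1) := hIHQ.trans (Bnd_mono hk'le)
  have hstep : Bnd k = k * Bnd (k - 1) ^ 2 := by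
    have hkeq : k = (k - 1) + 1 := by omega
    rw [hkeq, Bnd_succ, ← hkeq]
  calc Nat.card G = Nat.card (G ⧸ N) * Nat.card N := hGQ
    _ ≤ Nat.card (G ⧸ N) * (1 + (t - 1) * Nat.card (G ⧸ N)) :=
        Nat.mul_le_mul_left _ hNbound
    _ = Nat.card (G ⧸ N) + (t - 1) * (Nat.card (G ⧸ N) * Nat.card (G ⧸ N)) := by ring
    _ ≤ Nat.card (G ⧸ N) * Nat.card (G ⧸ N)
        + (t - 1) * (Nat.card (G ⧸ N) * Nat.card (G ⧸ N)) :=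
        Nat.add_le_add_right (Nat.le_mul_of_pos_right _ hQpos) _
    _ = (1 + (t - 1)) * (Nat.card (G ⧸ N) * Nat.card (G ⧸ N)) := by ring
    _ ≤ k * (Bnd (k - 1) * Bnd (k - 1)) :=
        Nat.mul_le_mul (by omega) (Nat.mul_le_mul hQB hQB)
    _ = Bnd k := by rw [hstep]; ring

theorem card_solvable_le_of_primePow_classes
    {G : Type*} [Group G] [Finite G] (hsolv : IsSolvable G) (k : ℕ)
    (hk : {C : Set G | ∃ x : G, (∃ p m : ℕ, p.Prime ∧ orderOf x = p ^ m) ∧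
        C = conjugatesOf x}.ncard = k) :
    Nat.card G ≤ ∏ i ∈ Finset.range k, (k - i) ^ 2 ^ i := by
  have := main (Nat.card G) G hsolv rfl
  rw [show (ppSet G).ncard = k from hk] at this
  exact this
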